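/- Let λ, c₁, c₂, Γ₁, Γ₂, B > 0 with 2λc₁ > 1 and 2λc₂ = 1, let β₁ ∈ (0,1), and set i₀ = ⌈2λc₁⌉. Then there exist constants C > 0 and T₀ ∈ ℕ such that for every integer T ≥ T₀ with β₁T ∈ ℕ and every sequence of nonnegative reals (a_t)_{t=i₀}^{T+1} with a_{i₀} ≤ 4B², a_{t+1} ≤ (1 − 2λc₁/t) a_t + c₁²Γ₁²/t² for i₀ ≤ t ≤ β₁T, and a_{t+1} ≤ (1 − 2λc₂/t) a_t + c₂²Γ₂²/t² for β₁T < t ≤ T, one has a_{T+1} ≤ (1/T)·[ 4Γ₁² β₁^{2λc₂−1} c₁²/(2λc₁ − 1) + 4Γ₂² c₂² · log(1/β₁) ] + C / T^{min(2, 2λc₁)}. -/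

import Mathlib

private lemma stepA (K γ ν E D s x y : ℝ) (hK : 1 < K) (hγ1 : 1 ≤ γ) (hγK : γ ≤ K)
    (hE : 0 < E) (hνE : ν * (K - 1) = 4 * E) (hD : 0 ≤ D) (hs : K ≤ s)
    (hx : x ≤ ν / s + D / s ^ γ) (hy : y ≤ (1 - K / s) * x + E / s ^ 2) :
    y ≤ ν / (s + 1) + D / (s + 1) ^ γ := by
  have hs0 : (0:ℝ) < s := by linarith
  have hν0 : 0 < ν := by nlinarith
  have hcoef : 0 ≤ 1 - K / s := by
    rw [sub_nonneg, div_le_one hs0]; exact hs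
  have hsγ : (0:ℝ) < s ^ γ := Real.rpow_pos_of_pos hs0 γ
  have hs1γ : (0:ℝ) < (s + 1) ^ γ := Real.rpow_pos_of_pos (by linarith) γ
  have hKν : K * ν = ν + 4 * E := by linear_combination hνE
  have h1 : (1 - K / s) * (ν / s) + E / s ^ 2 ≤ ν / (s + 1) := by
    have hL : (1 - K / s) * (ν / s) + E / s ^ 2 = (s * ν - K * ν + E) / s ^ 2 := by
      field_simp
    rw [hL, div_le_div_iff₀ (by positivity) (by positivity)]
    have hexp : ν*s^2 - (s*ν - K*ν + E)*(s+1) = ν + 3*(E*s) + 3*E := by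
      linear_combination (s+1)*hKν
    nlinarith [mul_pos hE hs0]
  have hber : 1 - K / s ≤ s ^ γ / (s + 1) ^ γ := by
    have hq : (0:ℝ) < s + 1 := by linarith
    have hm1 : (-1:ℝ) ≤ -(1 / (s + 1)) := by
      rw [neg_le_neg_iff, div_le_one hq]; linarith
    have hb := one_add_mul_self_le_rpow_one_add hm1 hγ1
    have he : (1:ℝ) + -(1 / (s + 1)) = s / (s + 1) := by field_simp; ring
    rw [he, Real.div_rpow hs0.le hq.le] at hb
    have hdd : γ / (s + 1) ≤ K / s := by
      apply div_le_div₀ (by linarith) hγK hs0 (by linarith)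
    have hb2 : 1 - γ / (s + 1) ≤ s ^ γ / (s + 1) ^ γ := by
      rw [show 1 - γ/(s+1) = 1 + γ * -(1/(s+1)) by ring]; exact hb
    linarith [hb2, hdd]
  have h2 : (1 - K / s) * (D / s ^ γ) ≤ D / (s + 1) ^ γ := by
    calc (1 - K / s) * (D / s ^ γ) ≤ (s ^ γ / (s + 1) ^ γ) * (D / s ^ γ) :=
          mul_le_mul_of_nonneg_right hber (by positivity)
      _ = D / (s + 1) ^ γ := by
          field_simp
  calc y ≤ (1 - K / s) * x + E / s ^ 2 := hy
    _ ≤ (1 - K / s) * (ν / s + D / s ^ γ) + E / s ^ 2 := by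
        exact add_le_add (mul_le_mul_of_nonneg_left hx hcoef) le_rfl
    _ = ((1 - K / s) * (ν / s) + E / s ^ 2) + (1 - K / s) * (D / s ^ γ) := by ring
    _ ≤ ν / (s + 1) + D / (s + 1) ^ γ := add_le_add h1 h2

set_option maxHeartbeats 1000000 in
/-- Regret bound for two-phase SGD with heterogeneous noise, boundary case
`2λc₂ = 1`: any nonnegative sequence satisfying the error recursions with
learning rates `c₁/t` (noise `Γ₁`) on the first `β₁T` steps and `c₂/t` (noise
`Γ₂`) on the remaining steps, started from `a_{i₀} ≤ 4B²`, satisfies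
`a_{T+1} ≤ (1/T)[4Γ₁²β₁^{2λc₂-1}c₁²/(2λc₁-1) + 4Γ₂²c₂² log(1/β₁)]
            + C/T^{min(2,2λc₁)}`. -/
theorem statement_13 (lam c1 c2 Γ1 Γ2 B : ℝ)
    (hlam : 0 < lam) (hc1 : 0 < c1) (hc2 : 0 < c2)
    (hΓ1 : 0 < Γ1) (hΓ2 : 0 < Γ2) (hB : 0 < B)
    (h1 : 1 < 2 * lam * c1) (h2 : 2 * lam * c2 = 1)
    (β : ℝ) (hβ : β ∈ Set.Ioo (0 : ℝ) 1) :
    ∃ C : ℝ, 0 < C ∧ ∃ T0 : ℕ, ∀ T : ℕ, T0 ≤ T →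
      ∀ m : ℕ, (m : ℝ) = β * T →
        ∀ a : ℕ → ℝ,
          (∀ t, ⌈2 * lam * c1⌉₊ ≤ t → t ≤ T + 1 → 0 ≤ a t) →
          a ⌈2 * lam * c1⌉₊ ≤ 4 * B ^ 2 →
          (∀ t, ⌈2 * lam * c1⌉₊ ≤ t → t ≤ m →
            a (t + 1) ≤ (1 - 2 * lam * c1 / t) * a t + c1 ^ 2 * Γ1 ^ 2 / (t : ℝ) ^ 2) →
          (∀ t, m < t → t ≤ T →
            a (t + 1) ≤ (1 - 2 * lam * c2 / t) * a t + c2 ^ 2 * Γ2 ^ 2 / (t : ℝ) ^ 2) →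
          a (T + 1) ≤
            (1 / T) * (4 * Γ1 ^ 2 * β ^ (2 * lam * c2 - 1) * c1 ^ 2 / (2 * lam * c1 - 1) +
                4 * Γ2 ^ 2 * c2 ^ 2 * Real.log (1 / β)) +
              C / (T : ℝ) ^ (min (2 : ℝ) (2 * lam * c1)) := by
  obtain ⟨hβ0, hβ1⟩ := hβ
  set K := 2 * lam * c1 with hKdef
  have hK : 1 < K := h1
  set i0 := ⌈K⌉₊ with hi0def
  have hi0K : K ≤ (i0:ℝ) := Nat.le_ceil K
  set γ := min (2:ℝ) K with hγdef
  have hγ1 : 1 ≤ γ := le_min one_le_two hK.le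
  have hγK : γ ≤ K := min_le_right _ _
  have hγ0 : 0 ≤ γ := by linarith
  set E := c1 ^ 2 * Γ1 ^ 2 with hEdef
  have hE : 0 < E := by positivity
  set ν := 4 * Γ1 ^ 2 * c1 ^ 2 / (K - 1) with hνdef
  have hK1 : 0 < K - 1 := by linarith
  have hν0 : 0 < ν := by rw [hνdef]; positivity
  have hνE : ν * (K - 1) = 4 * E := by
    rw [hνdef, hEdef]; field_simp
  set F := c2 ^ 2 * Γ2 ^ 2 with hFdef
  have hF : 0 < F := by positivity
  have hi0R : (0:ℝ) < (i0:ℝ) := by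
    have : (1:ℝ) < (i0:ℝ) := lt_of_lt_of_le hK hi0K
    linarith
  set D := 4 * B ^ 2 * (i0:ℝ) ^ γ with hDdef
  have hD : 0 < D := by
    rw [hDdef]
    exact mul_pos (by positivity) (Real.rpow_pos_of_pos hi0R γ)
  refine ⟨D * β ^ (1 - γ), mul_pos hD (Real.rpow_pos_of_pos hβ0 _), ⌈((i0:ℝ) + 2) / β⌉₊, ?_⟩
  intro T hT m hm a hnn ha0 h3 h4
  have hTmlarge : ((i0:ℝ) + 2) / β ≤ T := le_trans (Nat.le_ceil _) (by exact_mod_cast hT)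
  have hTpos : (0:ℝ) < T := lt_of_lt_of_le (by positivity) hTmlarge
  rw [div_le_iff₀ hβ0] at hTmlarge
  have hmlarge : (i0:ℝ) + 2 ≤ (m:ℝ) := by
    rw [hm]; linarith [hTmlarge]
  have hmi0 : i0 + 2 ≤ m := by exact_mod_cast hmlarge
  have hm0 : (0:ℝ) < (m:ℝ) := by linarith
  have hmT : (m:ℝ) < T := by rw [hm]; nlinarith [mul_pos (by linarith : (0:ℝ) < 1 - β) hTpos]
  have hmTnat : m < T := by exact_mod_cast hmT
  -- Phase 1
  have phase1 : ∀ t : ℕ, i0 ≤ t → t ≤ m + 1 → a t ≤ ν / t + D / (t:ℝ) ^ γ := by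
    intro t ht
    induction t, ht using Nat.le_induction with
    | base =>
      intro _
      have hDi : D / (i0:ℝ) ^ γ = 4 * B ^ 2 := by
        rw [hDdef, mul_div_assoc,
          div_self (ne_of_gt (Real.rpow_pos_of_pos hi0R γ)), mul_one]
      have hνi : 0 ≤ ν / (i0:ℝ) := by positivity
      rw [hDi]
      linarith
    | succ t ht ih =>
      intro htm
      have htm' : t ≤ m := by omega
      have hx := ih (by omega)
      have hy := h3 t ht htm'
      have hKt : K ≤ (t:ℝ) := le_trans hi0K (by exact_mod_cast ht)
      have hres := stepA K γ ν E D (t:ℝ) (a t) (a (t+1)) hK hγ1 hγK hE hνE hD.le hKt hx hy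
      push_cast
      exact hres
  -- Phase 2
  have phase2 : ∀ t : ℕ, m ≤ t → t ≤ T →
      (t:ℝ) * a (t+1) ≤ (m:ℝ) * a (m+1) + F * (Real.log t - Real.log m) := by
    intro t ht
    induction t, ht using Nat.le_induction with
    | base => intro _; simp
    | succ t ht ih =>
      intro htT
      have ihh := ih (by omega)
      have hrec := h4 (t+1) (by omega) htT
      rw [h2] at hrec
      push_cast at hrec
      have ht1 : (1:ℝ) ≤ (t:ℝ) := by
        have : 1 ≤ t := by omega
        exact_mod_cast this
      have ht0 : (0:ℝ) < (t:ℝ) + 1 := by linarith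
      have hne : (t:ℝ) + 1 ≠ 0 := ne_of_gt ht0
      have key : ((t:ℝ) + 1) * a (t+1+1) ≤ (t:ℝ) * a (t+1) + F / ((t:ℝ) + 1) := by
        have hmul := mul_le_mul_of_nonneg_left hrec ht0.le
        have heq : ((t:ℝ)+1) * ((1 - 1/((t:ℝ)+1)) * a (t+1) + F/((t:ℝ)+1)^2)
            = (t:ℝ) * a (t+1) + F / ((t:ℝ)+1) := by
          field_simp; ring
        linarith [heq ▸ hmul]
      have hlog : 1 / ((t:ℝ)+1) ≤ Real.log ((t:ℝ)+1) - Real.log t := by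
        have hx : (0:ℝ) < (t:ℝ)/((t:ℝ)+1) := by positivity
        have hl := Real.log_le_sub_one_of_pos hx
        rw [Real.log_div (by linarith) hne] at hl
        have he : (t:ℝ)/((t:ℝ)+1) - 1 = -(1/((t:ℝ)+1)) := by field_simp; ring
        rw [he] at hl; linarith
      have hFlog := mul_le_mul_of_nonneg_left hlog hF.le
      push_cast
      calc ((t:ℝ)+1) * a (t+1+1) ≤ (t:ℝ) * a (t+1) + F / ((t:ℝ)+1) := key
        _ ≤ (m:ℝ) * a (m+1) + F * (Real.log t - Real.log m)
              + F * (Real.log ((t:ℝ)+1) - Real.log t) := by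
            have : F / ((t:ℝ)+1) = F * (1/((t:ℝ)+1)) := by ring
            linarith [ihh]
        _ = (m:ℝ) * a (m+1) + F * (Real.log ((t:ℝ)+1) - Real.log m) := by ring
  -- combine
  have hfin := phase2 T hmTnat.le le_rfl
  have hlogm : Real.log (m:ℝ) = Real.log β + Real.log (T:ℝ) := by
    rw [hm, Real.log_mul (ne_of_gt hβ0) (ne_of_gt hTpos)]
  have hlogβ : Real.log (1/β) = - Real.log β := by
    rw [one_div, Real.log_inv]
  have hlt : Real.log (T:ℝ) - Real.log (m:ℝ) = Real.log (1/β) := by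
    rw [hlogm, hlogβ]; ring
  rw [hlt] at hfin
  have ham1 := phase1 (m+1) (by omega) le_rfl
  push_cast at ham1
  have hmγ : (0:ℝ) < (m:ℝ) ^ γ := Real.rpow_pos_of_pos hm0 γ
  have hmono : a (m+1) ≤ ν/(m:ℝ) + D/(m:ℝ)^γ := by
    have hA : ν/((m:ℝ)+1) ≤ ν/(m:ℝ) := div_le_div_of_nonneg_left hν0.le hm0 (by linarith)
    have hBB : D/((m:ℝ)+1)^γ ≤ D/(m:ℝ)^γ :=
      div_le_div_of_nonneg_left hD.le hmγ
        (Real.rpow_le_rpow hm0.le (by linarith) hγ0)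
    linarith
  have hmne : (m:ℝ) ≠ 0 := ne_of_gt hm0
  have hmγne : (m:ℝ) ^ γ ≠ 0 := ne_of_gt hmγ
  have hdivm : (m:ℝ)/(m:ℝ)^γ = (m:ℝ)^(1-γ) := by
    rw [Real.rpow_sub hm0, Real.rpow_one]
  have hma : (m:ℝ) * a (m+1) ≤ ν + D * ((m:ℝ)^(1-γ)) := by
    have hmul := mul_le_mul_of_nonneg_left hmono hm0.le
    have he : (m:ℝ) * (ν/(m:ℝ) + D/(m:ℝ)^γ) = ν + D * ((m:ℝ)/(m:ℝ)^γ) := by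
      field_simp
    rw [he, hdivm] at hmul
    exact hmul
  have hm1γ : (m:ℝ)^(1-γ) = β^(1-γ) * (T:ℝ)^(1-γ) := by
    rw [hm, Real.mul_rpow hβ0.le (Nat.cast_nonneg T)]
  rw [hm1γ] at hma
  have hTa : (T:ℝ) * a (T+1) ≤ ν + F * Real.log (1/β) + D * β^(1-γ) * (T:ℝ)^(1-γ) := by
    linarith [hfin, hma]
  have hTγpos : (0:ℝ) < (T:ℝ)^γ := Real.rpow_pos_of_pos hTpos γ
  have hTγ' : (T:ℝ)^(1-γ)/(T:ℝ) = 1/(T:ℝ)^γ := by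
    rw [div_eq_div_iff (ne_of_gt hTpos) (ne_of_gt hTγpos), one_mul, ← Real.rpow_add hTpos]
    have : (1-γ)+γ = 1 := by ring
    rw [this, Real.rpow_one]
  have hdiv : a (T+1) ≤ (ν + F * Real.log (1/β))/(T:ℝ) + D * β^(1-γ) / (T:ℝ)^γ := by
    have hle : a (T+1) ≤ (ν + F * Real.log (1/β) + D * β^(1-γ) * (T:ℝ)^(1-γ))/(T:ℝ) :=
      (le_div_iff₀ hTpos).mpr (by linarith [hTa])
    calc a (T+1) ≤ (ν + F * Real.log (1/β) + D * β^(1-γ) * (T:ℝ)^(1-γ))/(T:ℝ) := hle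
      _ = (ν + F * Real.log (1/β))/(T:ℝ) + D * β^(1-γ) * ((T:ℝ)^(1-γ)/(T:ℝ)) := by ring
      _ = (ν + F * Real.log (1/β))/(T:ℝ) + D * β^(1-γ) / (T:ℝ)^γ := by
          rw [hTγ', mul_one_div]
  have hβ0' : β ^ (2 * lam * c2 - 1) = (1:ℝ) := by
    rw [h2, sub_self, Real.rpow_zero]
  rw [hβ0']
  have hlognn : 0 ≤ Real.log (1/β) := by
    apply Real.log_nonneg
    rw [le_div_iff₀ hβ0, one_mul]; exact hβ1.le
  have e1 : 4 * Γ1 ^ 2 * 1 * c1 ^ 2 / (K - 1) = ν := by rw [hνdef]; ring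
  rw [e1]
  have e2 : 0 ≤ (4 * Γ2 ^ 2 * c2 ^ 2 - F) * Real.log (1/β) := by
    apply mul_nonneg _ hlognn
    rw [hFdef]; linarith [mul_nonneg (sq_nonneg Γ2) (sq_nonneg c2)]
  have expand : (1/(T:ℝ)) * (ν + 4 * Γ2 ^ 2 * c2 ^ 2 * Real.log (1/β))
      - (ν + F * Real.log (1/β))/(T:ℝ)
      = ((4 * Γ2 ^ 2 * c2 ^ 2 - F) * Real.log (1/β)) / (T:ℝ) := by ring
  have hpos2 : 0 ≤ ((4 * Γ2 ^ 2 * c2 ^ 2 - F) * Real.log (1/β)) / (T:ℝ) :=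
    div_nonneg e2 hTpos.le
  linarith [hdiv, expand, hpos2]
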